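/- Suppose all n ≥ 2 players have equal weight 1 and additive linear valuations v_k(y) = Σ_j v_{kj}·y_j with v_{kj} ≥ 0. Let x* be a feasible allocation maximizing Π_k v_k(x_k) over feasible allocations with v_k(x*_k) > 0 for all k, and for a fixed player i let x*_{-i} be a feasible allocation maximizing Π_{k≠i} v_k(x_k) with v_k((x*_{-i})_k) > 0 for all k ≠ i. Then for every player k ≠ i, v_k((x*_{-i})_k) ≥ v_k(x*_k): removing a player from a Proportionally Fair allocation does not decrease any remaining player's Proportionally Fair value. -/

import Mathlib

open Finset

private lemma small_eps {c M x0 : ℝ} (hM : 0 ≤ M) (hx0 : 0 < x0)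
    (h : ∀ ε : ℝ, 0 < ε → ε ≤ x0 → c ≤ ε * M) : c ≤ 0 := by
  rcases eq_or_lt_of_le hM with hM0 | hMpos
  · have := h x0 hx0 le_rfl
    simpa [← hM0] using this
  · by_contra hc
    push_neg at hc
    have hεpos : 0 < min x0 (c / (2*M)) := lt_min hx0 (by positivity)
    have := h _ hεpos (min_le_left _ _)
    have h2 : min x0 (c / (2*M)) * M ≤ c/2 := by
      have h3 : min x0 (c / (2*M)) ≤ c/(2*M) := min_le_right _ _
      calc min x0 (c / (2*M)) * M ≤ (c/(2*M)) * M := by nlinarith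
        _ = c/2 := by field_simp
    linarith

private lemma foc_transfer {n m : ℕ} (F : Finset (Fin n))
    (vv : Fin n → Fin m → ℝ) (hvv : ∀ k l, 0 ≤ vv k l)
    (x : Fin n → Fin m → ℝ)
    (hx0 : ∀ k l, 0 ≤ x k l) (hxf : ∀ l, ∑ k, x k l ≤ 1)
    (hmax : ∀ z : Fin n → Fin m → ℝ, (∀ k l, 0 ≤ z k l) → (∀ l, ∑ k, z k l ≤ 1) →
      ∏ k ∈ F, (∑ l, vv k l * z k l) ≤ ∏ k ∈ F, (∑ l, vv k l * x k l))
    (hpos : ∀ k ∈ F, 0 < ∑ l, vv k l * x k l)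
    {k k' : Fin n} (hk : k ∈ F) (hk' : k' ∈ F) (j : Fin m) (hxj : 0 < x k' j) :
    vv k j * (∑ l, vv k' l * x k' l) ≤ vv k' j * (∑ l, vv k l * x k l) := by
  rcases eq_or_ne k k' with rfl | hkk'
  · rfl
  set a : Fin n → ℝ := fun k => ∑ l, vv k l * x k l with ha
  have key : vv k j * a k' - vv k' j * a k ≤ 0 := by
    apply small_eps (M := vv k j * vv k' j) (x0 := x k' j)
      (by have := hvv k j; have := hvv k' j; positivity) hxj
    intro ε hε hεx
    set z : Fin n → Fin m → ℝ := fun k'' l =>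
      x k'' l + (if k'' = k ∧ l = j then ε else 0) - (if k'' = k' ∧ l = j then ε else 0) with hz
    have hz0 : ∀ k'' l, 0 ≤ z k'' l := by
      intro k'' l
      simp only [hz]
      split_ifs with h1 h2 h3
      · exact absurd (h1.1.symm.trans h2.1) hkk'
      · linarith [hx0 k'' l]
      · obtain ⟨rfl, rfl⟩ := h3; linarith [hxj]
      · linarith [hx0 k'' l]
    have hzf : ∀ l, ∑ k'', z k'' l ≤ 1 := by
      intro l
      have : ∑ k'', z k'' l = ∑ k'', x k'' l := by
        simp only [hz, Finset.sum_sub_distrib, Finset.sum_add_distrib]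
        by_cases hl : l = j <;> simp [hl, Finset.sum_ite_eq']
      rw [this]; exact hxf l
    have e1 : ∀ k'', ∑ l, vv k'' l * (if k'' = k ∧ l = j then ε else 0)
        = (if k'' = k then ε * vv k j else 0) := by
      intro k''
      by_cases hkk : k'' = k
      · subst hkk; simp [mul_ite, Finset.sum_ite_eq', mul_comm]
      · simp [hkk]
    have e2 : ∀ k'', ∑ l, vv k'' l * (if k'' = k' ∧ l = j then ε else 0)
        = (if k'' = k' then ε * vv k' j else 0) := by
      intro k''
      by_cases hkk : k'' = k'
      · subst hkk; simp [mul_ite, Finset.sum_ite_eq', mul_comm]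
      · simp [hkk]
    have hval : ∀ k'' : Fin n, (∑ l, vv k'' l * z k'' l) =
        a k'' + (if k'' = k then ε * vv k j else 0) - (if k'' = k' then ε * vv k' j else 0) := by
      intro k''
      simp only [hz, mul_sub, mul_add, Finset.sum_sub_distrib, Finset.sum_add_distrib,
        e1, e2, ha]
    have hk'e : k' ∈ F.erase k := Finset.mem_erase.2 ⟨Ne.symm hkk', hk'⟩
    set P : ℝ := ∏ k'' ∈ (F.erase k).erase k', a k'' with hP
    have hPpos : 0 < P := by
      apply Finset.prod_pos
      intro k'' hk''
      exact hpos k'' (Finset.mem_of_mem_erase (Finset.mem_of_mem_erase hk''))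
    have hprod := hmax z hz0 hzf
    rw [← Finset.mul_prod_erase F _ hk, ← Finset.mul_prod_erase (F.erase k) _ hk'e,
        ← Finset.mul_prod_erase F a hk, ← Finset.mul_prod_erase (F.erase k) a hk'e] at hprod
    have hrest : ∏ k'' ∈ (F.erase k).erase k', (∑ l, vv k'' l * z k'' l) = P := by
      apply Finset.prod_congr rfl
      intro k'' hk''
      have h1 : k'' ≠ k' := (Finset.mem_erase.1 hk'').1
      have h2 : k'' ≠ k := (Finset.mem_erase.1 (Finset.mem_of_mem_erase hk'')).1
      rw [hval]; simp [h1, h2]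
    rw [hrest, hval k, hval k'] at hprod
    simp only [eq_self_iff_true, if_true, if_neg hkk', if_neg (Ne.symm hkk'), sub_zero, add_zero] at hprod
    have hL : (a k + ε * vv k j) * ((a k' - ε * vv k' j) * P) ≤ a k * (a k' * P) := by
      convert hprod using 2 <;> ring
    have hLR : (a k + ε * vv k j) * (a k' - ε * vv k' j) ≤ a k * a k' := by
      have := (mul_le_mul_iff_left₀ hPpos).mp (by nlinarith : ((a k + ε * vv k j) * (a k' - ε * vv k' j)) * P ≤ (a k * a k') * P)
      exact this
    nlinarith
  linarith

private lemma foc_slack {n m : ℕ} (F : Finset (Fin n))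
    (vv : Fin n → Fin m → ℝ) (hvv : ∀ k l, 0 ≤ vv k l)
    (x : Fin n → Fin m → ℝ)
    (hx0 : ∀ k l, 0 ≤ x k l) (hxf : ∀ l, ∑ k, x k l ≤ 1)
    (hmax : ∀ z : Fin n → Fin m → ℝ, (∀ k l, 0 ≤ z k l) → (∀ l, ∑ k, z k l ≤ 1) →
      ∏ k ∈ F, (∑ l, vv k l * z k l) ≤ ∏ k ∈ F, (∑ l, vv k l * x k l))
    (hpos : ∀ k ∈ F, 0 < ∑ l, vv k l * x k l)
    {k : Fin n} (hk : k ∈ F) (j : Fin m) (hsl : ∑ k', x k' j < 1) :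
    vv k j = 0 := by
  set a : Fin n → ℝ := fun k => ∑ l, vv k l * x k l with ha
  set s : ℝ := 1 - ∑ k', x k' j with hs
  have hspos : 0 < s := by simp only [hs]; linarith
  set z : Fin n → Fin m → ℝ := fun k'' l =>
    x k'' l + (if k'' = k ∧ l = j then s else 0) with hz
  have hz0 : ∀ k'' l, 0 ≤ z k'' l := by
    intro k'' l
    simp only [hz]
    split_ifs
    · linarith [hx0 k'' l]
    · linarith [hx0 k'' l]
  have hzf : ∀ l, ∑ k'', z k'' l ≤ 1 := by
    intro l
    simp only [hz, Finset.sum_add_distrib]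
    by_cases hl : l = j
    · subst hl
      simp [Finset.sum_ite_eq', hs]
    · simp [hl]
      exact hxf l
  have e1 : ∀ k'', ∑ l, vv k'' l * (if k'' = k ∧ l = j then s else 0)
      = (if k'' = k then s * vv k j else 0) := by
    intro k''
    by_cases hkk : k'' = k
    · subst hkk; simp [mul_ite, Finset.sum_ite_eq', mul_comm]
    · simp [hkk]
  have hval : ∀ k'' : Fin n, (∑ l, vv k'' l * z k'' l) =
      a k'' + (if k'' = k then s * vv k j else 0) := by
    intro k''
    simp only [hz, mul_add, Finset.sum_add_distrib, e1, ha]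
  set P : ℝ := ∏ k'' ∈ F.erase k, a k'' with hP
  have hPpos : 0 < P := by
    apply Finset.prod_pos
    intro k'' hk''
    exact hpos k'' (Finset.mem_of_mem_erase hk'')
  have hprod := hmax z hz0 hzf
  rw [← Finset.mul_prod_erase F _ hk, ← Finset.mul_prod_erase F a hk] at hprod
  have hrest : ∏ k'' ∈ F.erase k, (∑ l, vv k'' l * z k'' l) = P := by
    apply Finset.prod_congr rfl
    intro k'' hk''
    rw [hval]; simp [(Finset.mem_erase.1 hk'').1]
  rw [hrest, hval k, if_pos rfl] at hprod
  have : a k + s * vv k j ≤ a k := (mul_le_mul_iff_left₀ hPpos).mp hprod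
  have h1 : vv k j ≤ 0 := by nlinarith
  linarith [hvv k j]

/-- For additive linear valuations (equal weights), removing a player from a
Proportionally Fair allocation does not decrease any remaining player's Proportionally Fair
value: `v_k((x*_{-i})_k) ≥ v_k(x*_k)` for all `k ≠ i`. -/
theorem stmt_10 {n m : ℕ} (hn : 2 ≤ n) (i : Fin n)
    (vv : Fin n → Fin m → ℝ) (hvv : ∀ k l, 0 ≤ vv k l)
    (xstar : Fin n → Fin m → ℝ)
    (hxstar_nonneg : ∀ k l, 0 ≤ xstar k l) (hxstar_feas : ∀ l, ∑ k, xstar k l ≤ 1)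
    (hxstar_max : ∀ x : Fin n → Fin m → ℝ,
      (∀ k l, 0 ≤ x k l) → (∀ l, ∑ k, x k l ≤ 1) →
      ∏ k, (∑ l, vv k l * x k l) ≤ ∏ k, (∑ l, vv k l * xstar k l))
    (hpos : ∀ k, 0 < ∑ l, vv k l * xstar k l)
    (xmi : Fin n → Fin m → ℝ)
    (hxmi_nonneg : ∀ k l, 0 ≤ xmi k l) (hxmi_feas : ∀ l, ∑ k, xmi k l ≤ 1)
    (hxmi_max : ∀ x : Fin n → Fin m → ℝ,
      (∀ k l, 0 ≤ x k l) → (∀ l, ∑ k, x k l ≤ 1) →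
      ∏ k ∈ univ.erase i, (∑ l, vv k l * x k l)
        ≤ ∏ k ∈ univ.erase i, (∑ l, vv k l * xmi k l))
    (hpos' : ∀ k ∈ univ.erase i, 0 < ∑ l, vv k l * xmi k l) :
    ∀ k, k ≠ i → ∑ l, vv k l * xstar k l ≤ ∑ l, vv k l * xmi k l := by
   classical
  intro k0 hk0i
  by_contra hcon
  push_neg at hcon
  -- notation
  set a : Fin n → ℝ := fun k => ∑ l, vv k l * xstar k l with ha
  have hposa : ∀ k, 0 < a k := hpos
  -- modified allocation for the reduced problem: give player i nothing
  set y : Fin n → Fin m → ℝ := fun k => if k = i then (fun _ => 0) else xmi k with hy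
  have hy0 : ∀ k l, 0 ≤ y k l := by
    intro k l; simp only [hy]; split_ifs with h
    · exact le_refl 0
    · exact hxmi_nonneg k l
  have hyf : ∀ l, ∑ k, y k l ≤ 1 := by
    intro l
    refine le_trans (Finset.sum_le_sum ?_) (hxmi_feas l)
    intro k _
    simp only [hy]; split_ifs with h
    · exact hxmi_nonneg k l
    · exact le_refl _
  set b : Fin n → ℝ := fun k => ∑ l, vv k l * y k l with hb
  have hyval : ∀ k ∈ univ.erase i, b k = ∑ l, vv k l * xmi k l := by
    intro k hk
    simp only [hb, hy, if_neg (Finset.mem_erase.1 hk).1]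
  have hymax : ∀ z : Fin n → Fin m → ℝ, (∀ k l, 0 ≤ z k l) → (∀ l, ∑ k, z k l ≤ 1) →
      ∏ k ∈ univ.erase i, (∑ l, vv k l * z k l) ≤ ∏ k ∈ univ.erase i, (∑ l, vv k l * y k l) := by
    intro z hz0 hzf
    have : ∏ k ∈ univ.erase i, (∑ l, vv k l * y k l) = ∏ k ∈ univ.erase i, (∑ l, vv k l * xmi k l) :=
      Finset.prod_congr rfl (fun k hk => hyval k hk)
    rw [this]
    exact hxmi_max z hz0 hzf
  have hposb : ∀ k ∈ univ.erase i, 0 < b k := by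
    intro k hk; rw [hyval k hk]; exact hpos' k hk
  -- FOC instances
  have Tx := fun {k k' : Fin n} (hk : k ∈ (univ : Finset (Fin n))) (hk' : k' ∈ (univ : Finset (Fin n))) (j : Fin m) (hxj : 0 < xstar k' j) =>
    foc_transfer univ vv hvv xstar hxstar_nonneg hxstar_feas hxstar_max (fun k _ => hpos k) hk hk' j hxj
  have Sx := fun {k : Fin n} (hk : k ∈ (univ : Finset (Fin n))) (j : Fin m) (hsl : ∑ k', xstar k' j < 1) =>
    foc_slack univ vv hvv xstar hxstar_nonneg hxstar_feas hxstar_max (fun k _ => hpos k) hk j hsl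
  have Ty := fun {k k' : Fin n} (hk : k ∈ univ.erase i) (hk' : k' ∈ univ.erase i) (j : Fin m) (hxj : 0 < y k' j) =>
    foc_transfer (univ.erase i) vv hvv y hy0 hyf hymax hposb hk hk' j hxj
  have Sy := fun {k : Fin n} (hk : k ∈ univ.erase i) (j : Fin m) (hsl : ∑ k', y k' j < 1) =>
    foc_slack (univ.erase i) vv hvv y hy0 hyf hymax hposb hk j hsl
  -- nonemptiness
  have huniv_ne : (univ : Finset (Fin n)).Nonempty := ⟨i, Finset.mem_univ i⟩
  have hne : (univ.erase i).Nonempty := ⟨k0, Finset.mem_erase.2 ⟨hk0i, Finset.mem_univ k0⟩⟩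
  -- prices
  set p : Fin m → ℝ := fun j => univ.sup' huniv_ne (fun k => vv k j / a k) with hp
  set q : Fin m → ℝ := fun j => (univ.erase i).sup' hne (fun k => vv k j / b k) with hq
  have hp_ge : ∀ (k : Fin n) (j : Fin m), vv k j / a k ≤ p j := by
    intro k j; exact Finset.le_sup' (fun k => vv k j / a k) (Finset.mem_univ k)
  have hp_nonneg : ∀ j, 0 ≤ p j := by
    intro j
    have h1 := hposa i
    have h2 := hvv i j
    exact le_trans (by positivity) (hp_ge i j)
  have hq_ge : ∀ k ∈ univ.erase i, ∀ j : Fin m, vv k j / b k ≤ q j := by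
    intro k hk j; exact Finset.le_sup' (fun k => vv k j / b k) hk
  have hq_nonneg : ∀ j, 0 ≤ q j := by
    intro j
    obtain ⟨k1, hk1⟩ := hne
    refine le_trans ?_ (hq_ge k1 hk1 j)
    have := hposb k1 hk1
    have := hvv k1 j
    positivity
  have hp_eq : ∀ (k : Fin n) (j : Fin m), 0 < xstar k j → p j = vv k j / a k := by
    intro k j hx
    refine le_antisymm ?_ (hp_ge k j)
    apply Finset.sup'_le
    intro k' _
    rw [div_le_div_iff₀ (hposa k') (hposa k)]
    exact Tx (Finset.mem_univ k') (Finset.mem_univ k) j hx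
  have hq_eq : ∀ k ∈ univ.erase i, ∀ j : Fin m, 0 < y k j → q j = vv k j / b k := by
    intro k hk j hx
    refine le_antisymm ?_ (hq_ge k hk j)
    apply Finset.sup'_le
    intro k' hk'
    rw [div_le_div_iff₀ (hposb k' hk') (hposb k hk)]
    exact Ty hk' hk j hx
  have hq_zero : ∀ j : Fin m, (∑ k, y k j) < 1 → q j = 0 := by
    intro j hsl
    refine le_antisymm ?_ (hq_nonneg j)
    apply Finset.sup'_le
    intro k' hk'
    rw [Sy hk' j hsl]
    simp
  -- budgets
  have hbudget_p : ∀ k : Fin n, ∑ j, p j * xstar k j = 1 := by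
    intro k
    have hterm : ∀ j : Fin m, p j * xstar k j = (vv k j * xstar k j) / a k := by
      intro j
      rcases (hxstar_nonneg k j).eq_or_lt with h | h
      · rw [← h]; simp
      · rw [hp_eq k j h]; ring
    rw [Finset.sum_congr rfl (fun j _ => hterm j), ← Finset.sum_div]
    exact div_self (ne_of_gt (hposa k))
  have hbudget_q : ∀ k ∈ univ.erase i, ∑ j, q j * y k j = 1 := by
    intro k hk
    have hterm : ∀ j : Fin m, q j * y k j = (vv k j * y k j) / b k := by
      intro j
      rcases (hy0 k j).eq_or_lt with h | h
      · rw [← h]; simp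
      · rw [hq_eq k hk j h]; ring
    rw [Finset.sum_congr rfl (fun j _ => hterm j), ← Finset.sum_div]
    exact div_self (ne_of_gt (hposb k hk))
  -- the set of losers and the items they hold
  set S : Finset (Fin n) := (univ.erase i).filter (fun k => b k < a k) with hS
  have hk0S : k0 ∈ S := by
    refine Finset.mem_filter.2 ⟨Finset.mem_erase.2 ⟨hk0i, Finset.mem_univ k0⟩, ?_⟩
    rw [hyval k0 (Finset.mem_erase.2 ⟨hk0i, Finset.mem_univ k0⟩)]
    exact hcon
  set T : Finset (Fin m) := univ.filter (fun j => ∃ k ∈ S, 0 < xstar k j ∧ 0 < vv k j) with hT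
  have hqp : ∀ j ∈ T, p j < q j := by
    intro j hj
    obtain ⟨k, hkS, hxk, hvk⟩ := (Finset.mem_filter.1 hj).2
    have hkE : k ∈ univ.erase i := (Finset.mem_filter.1 hkS).1
    have hba : b k < a k := (Finset.mem_filter.1 hkS).2
    have hbk : 0 < b k := hposb k hkE
    have h1 : p j = vv k j / a k := hp_eq k j hxk
    have h2 : vv k j / b k ≤ q j := hq_ge k hkE j
    have h3 : vv k j / a k < vv k j / b k := div_lt_div_of_pos_left hvk hbk hba
    linarith
  have hTne : T.Nonempty := by
    have h0 : (0:ℝ) < ∑ l, vv k0 l * xstar k0 l := hposa k0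
    have : ∑ _l : Fin m, (0:ℝ) < ∑ l, vv k0 l * xstar k0 l := by simpa using h0
    obtain ⟨l, _, hl⟩ := Finset.exists_lt_of_sum_lt this
    rcases mul_pos_iff.1 hl with ⟨hv, hx⟩ | ⟨hv, _⟩
    · exact ⟨l, Finset.mem_filter.2 ⟨Finset.mem_univ l, k0, hk0S, hx, hv⟩⟩
    · exact absurd (hvv k0 l) (not_le.2 hv)
  -- losers spend everything on T
  have hS_T_budget : ∀ k ∈ S, ∑ j ∈ T, p j * xstar k j = 1 := by
    intro k hkS
    rw [← hbudget_p k]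
    apply Finset.sum_subset (Finset.filter_subset _ _)
    intro j _ hjT
    rcases (hxstar_nonneg k j).eq_or_lt with h | h
    · rw [← h]; ring
    · have hnv : ¬ (0 < vv k j) := by
        intro hv
        exact hjT (Finset.mem_filter.2 ⟨Finset.mem_univ j, k, hkS, h, hv⟩)
      have hv0 : vv k j = 0 := le_antisymm (not_lt.1 hnv) (hvv k j)
      rw [hp_eq k j h, hv0]
      simp
  -- price of T under p is at least |S|
  have hpT : (S.card : ℝ) ≤ ∑ j ∈ T, p j := by
    calc (S.card : ℝ) = ∑ _k ∈ S, (1:ℝ) := by simp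
    _ = ∑ k ∈ S, ∑ j ∈ T, p j * xstar k j := Finset.sum_congr rfl (fun k hk => (hS_T_budget k hk).symm)
    _ = ∑ j ∈ T, ∑ k ∈ S, p j * xstar k j := Finset.sum_comm
    _ = ∑ j ∈ T, p j * ∑ k ∈ S, xstar k j := by
        refine Finset.sum_congr rfl (fun j _ => ?_)
        rw [Finset.mul_sum]
    _ ≤ ∑ j ∈ T, p j * 1 := by
        refine Finset.sum_le_sum (fun j _ => ?_)
        refine mul_le_mul_of_nonneg_left ?_ (hp_nonneg j)
        refine le_trans (Finset.sum_le_sum_of_subset_of_nonneg (Finset.subset_univ S) ?_) (hxstar_feas j)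
        intro k _ _; exact hxstar_nonneg k j
    _ = ∑ j ∈ T, p j := by simp
  -- price of T under q is at most |S|
  have hqT : ∑ j ∈ T, q j ≤ (S.card : ℝ) := by
    have step1 : ∀ j ∈ T, q j ≤ ∑ k, q j * y k j := by
      intro j _
      rcases (hq_nonneg j).eq_or_lt with h | h
      · rw [← h]; simp
      · have hclear : ∑ k, y k j = 1 := by
          by_contra hc
          have : ∑ k, y k j < 1 := lt_of_le_of_ne (hyf j) hc
          exact absurd (hq_zero j this) (ne_of_gt h)
        rw [← Finset.mul_sum, hclear, mul_one]
    have hzero : ∀ k : Fin n, k ∉ S → ∑ j ∈ T, q j * y k j = 0 := by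
      intro k hkS
      rcases eq_or_ne k i with rfl | hki
      · simp [hy]
      · have hkE : k ∈ univ.erase i := Finset.mem_erase.2 ⟨hki, Finset.mem_univ k⟩
        have hab : a k ≤ b k := by
          by_contra hc
          exact hkS (Finset.mem_filter.2 ⟨hkE, not_le.1 hc⟩)
        apply Finset.sum_eq_zero
        intro j hjT
        have hy0' : y k j = 0 := by
          by_contra hyc
          have hyk : 0 < y k j := (hy0 k j).lt_of_ne (Ne.symm hyc)
          have h1 : q j = vv k j / b k := hq_eq k hkE j hyk
          have h2 : vv k j / b k ≤ vv k j / a k := by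
            apply div_le_div_of_nonneg_left (hvv k j) (hposa k) hab
          have h3 : vv k j / a k ≤ p j := hp_ge k j
          have h4 : p j < q j := hqp j hjT
          linarith
        rw [hy0', mul_zero]
    calc ∑ j ∈ T, q j ≤ ∑ j ∈ T, ∑ k, q j * y k j := Finset.sum_le_sum step1
    _ = ∑ k, ∑ j ∈ T, q j * y k j := Finset.sum_comm
    _ = ∑ k ∈ S, ∑ j ∈ T, q j * y k j := (Finset.sum_subset (Finset.subset_univ S)
          (fun k _ hk => hzero k hk)).symm
    _ ≤ ∑ k ∈ S, (1:ℝ) := by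
        refine Finset.sum_le_sum (fun k hkS => ?_)
        have hkE : k ∈ univ.erase i := (Finset.mem_filter.1 hkS).1
        rw [← hbudget_q k hkE]
        refine Finset.sum_le_sum_of_subset_of_nonneg (Finset.subset_univ T) ?_
        intro j _ _
        exact mul_nonneg (hq_nonneg j) (hy0 k j)
    _ = (S.card : ℝ) := by simp
  have hlt : ∑ j ∈ T, p j < ∑ j ∈ T, q j := Finset.sum_lt_sum_of_nonempty hTne hqp
  linarith
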